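/- arXiv:1112.4684 — 2 statements merged into one kernel-verified Lean document; each statement's English description precedes it below -/
import Mathlib

section
/- Let δ > 0 and let ψ : [-(1+δ), 1+δ] → [-(1+δ), 1+δ] be a continuously differentiable even map with ψ(0) = 1 and x·ψ'(x) < 0 for all x ≠ 0. Set a = ψ(1), a' = (1+δ)·a, b' = ψ(a'). Assume a < 0, 1 > b' > -a', and ψ(b') < -a'. Then the renormalized map Ψ(x) = (1/a)·ψ(ψ(a·x)) satisfies Ψ(0) = 1, x·Ψ'(x) < 0 for all x ≠ 0 in [-(1+δ), 1+δ], and Ψ maps [-(1+δ), 1+δ] into itself. -/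
/-- Well-definedness of the doubling renormalization operator
`R_δ(ψ)(x) = (1/a)·ψ(ψ(a·x))` on the space `M_δ`. -/
theorem renormalization_well_defined
    (δ : ℝ) (hδ : 0 < δ) (ψ : ℝ → ℝ)
    (hC1 : ContDiff ℝ 1 ψ)
    (hmap : ∀ x ∈ Set.Icc (-(1+δ)) (1+δ), ψ x ∈ Set.Icc (-(1+δ)) (1+δ))
    (heven : ∀ x, ψ (-x) = ψ x)
    (hψ0 : ψ 0 = 1)
    (hder : ∀ x ∈ Set.Icc (-(1+δ)) (1+δ), x ≠ 0 → x * deriv ψ x < 0)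
    (a a' b' : ℝ) (ha : a = ψ 1) (ha' : a' = (1+δ) * a) (hb' : b' = ψ a')
    (haneg : a < 0)
    (hb'lt : b' < 1) (hb'gt : -a' < b')
    (hψb' : ψ b' < -a')
    (Ψ : ℝ → ℝ) (hΨ : ∀ x, Ψ x = (1/a) * ψ (ψ (a * x))) :
    Ψ 0 = 1 ∧
    (∀ x ∈ Set.Icc (-(1+δ)) (1+δ), x ≠ 0 → x * deriv Ψ x < 0) ∧
    (∀ x ∈ Set.Icc (-(1+δ)) (1+δ), Ψ x ∈ Set.Icc (-(1+δ)) (1+δ)) := by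
  have hΨeq : Ψ = fun x => (1/a) * ψ (ψ (a * x)) := funext hΨ
  subst hΨeq
  have hψd : Differentiable ℝ ψ := hC1.differentiable one_ne_zero
  have ha0 : a ≠ 0 := ne_of_lt haneg
  have h1δ : (1:ℝ) < 1 + δ := by linarith
  have ha'neg : a' < 0 := by nlinarith
  have hb'pos : 0 < b' := by linarith
  have ha'gt : -1 < a' := by linarith
  -- ψ is antitone on [0, 1+δ]
  have hanti : StrictAntiOn ψ (Set.Icc 0 (1+δ)) := by
    apply strictAntiOn_of_deriv_neg (convex_Icc _ _) hC1.continuous.continuousOn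
    intro t ht
    rw [interior_Icc, Set.mem_Ioo] at ht
    have h := hder t ⟨by linarith [ht.1], le_of_lt ht.2⟩ (ne_of_gt ht.1)
    nlinarith [ht.1]
  have hanti' : AntitoneOn ψ (Set.Icc 0 (1+δ)) := hanti.antitoneOn
  -- ψ t ∈ [b', 1] for t ∈ [a', -a']
  have key1 : ∀ t, a' ≤ t → t ≤ -a' → b' ≤ ψ t ∧ ψ t ≤ 1 := by
    intro t h1 h2
    have habs : |t| ≤ -a' := abs_le.mpr ⟨by linarith, h2⟩
    have hψt : ψ t = ψ |t| := by
      rcases le_or_gt 0 t with h | h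
      · rw [abs_of_nonneg h]
      · rw [abs_of_neg h, heven]
    have hm1 : ψ |t| ≤ ψ 0 :=
      hanti' ⟨le_rfl, by linarith⟩ ⟨abs_nonneg t, by linarith⟩ (abs_nonneg t)
    have hm2 : ψ (-a') ≤ ψ |t| :=
      hanti' ⟨abs_nonneg t, by linarith⟩ ⟨by linarith, by linarith⟩ habs
    have hba : ψ (-a') = b' := by rw [heven a', ← hb']
    rw [hψt]
    rw [hψ0] at hm1
    exact ⟨by linarith, hm1⟩
  -- a*x ∈ [a', -a'] for x ∈ I
  have key0 : ∀ x ∈ Set.Icc (-(1+δ)) (1+δ), a' ≤ a*x ∧ a*x ≤ -a' := by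
    intro x hx
    obtain ⟨hx1, hx2⟩ := hx
    constructor <;> nlinarith
  -- ψ s ∈ [a, ψ b'] for s ∈ [b', 1]
  have key2 : ∀ s, b' ≤ s → s ≤ 1 → a ≤ ψ s ∧ ψ s ≤ ψ b' := by
    intro s h1 h2
    have hm1 : ψ s ≤ ψ b' :=
      hanti' ⟨le_of_lt hb'pos, by linarith⟩ ⟨by linarith, by linarith⟩ h1
    have hm2 : ψ 1 ≤ ψ s :=
      hanti' ⟨by linarith, by linarith⟩ ⟨by linarith, by linarith⟩ h2
    rw [← ha] at hm2
    exact ⟨hm2, hm1⟩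
  -- derivative formula
  have hderiv : ∀ x, HasDerivAt (fun x => (1/a) * ψ (ψ (a * x)))
      (deriv ψ (ψ (a*x)) * deriv ψ (a*x)) x := by
    intro x
    have h1 : HasDerivAt (fun x : ℝ => a * x) a x := by
      simpa using (hasDerivAt_id x).const_mul a
    have h2 : HasDerivAt ψ (deriv ψ (a*x)) (a*x) := (hψd (a*x)).hasDerivAt
    have h3 : HasDerivAt ψ (deriv ψ (ψ (a*x))) (ψ (a*x)) := (hψd (ψ (a*x))).hasDerivAt
    have h4 := (h3.comp x (h2.comp x h1)).const_mul (1/a)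
    have : (1/a) * (deriv ψ (ψ (a*x)) * (deriv ψ (a*x) * a)) =
        deriv ψ (ψ (a*x)) * deriv ψ (a*x) := by
      field_simp
    rw [this] at h4
    exact h4
  refine ⟨?_, ?_, ?_⟩
  · simp only [mul_zero, hψ0, ← ha]
    field_simp
  · intro x hx hx0
    rw [(hderiv x).deriv]
    obtain ⟨hax1, hax2⟩ := key0 x hx
    obtain ⟨hs1, hs2⟩ := key1 (a*x) hax1 hax2
    -- ψ (a*x) ∈ [b', 1] ⊂ (0, 1+δ], so ψ'(ψ(a*x)) < 0
    have hsI : ψ (a*x) ∈ Set.Icc (-(1+δ)) (1+δ) := ⟨by linarith, by linarith⟩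
    have hspos : 0 < ψ (a*x) := by linarith
    have hds := hder (ψ (a*x)) hsI (ne_of_gt hspos)
    have hds' : deriv ψ (ψ (a*x)) < 0 := by nlinarith
    -- a*x ∈ I
    have haxI : a*x ∈ Set.Icc (-(1+δ)) (1+δ) := ⟨by linarith, by linarith⟩
    rcases lt_or_gt_of_ne hx0 with hxneg | hxpos
    · have haxpos : 0 < a*x := mul_pos_of_neg_of_neg haneg hxneg
      have hda := hder (a*x) haxI (ne_of_gt haxpos)
      have hda' : deriv ψ (a*x) < 0 := by nlinarith
      have : 0 < deriv ψ (ψ (a*x)) * deriv ψ (a*x) := mul_pos_of_neg_of_neg hds' hda'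
      exact mul_neg_of_neg_of_pos hxneg this
    · have haxneg : a*x < 0 := mul_neg_of_neg_of_pos haneg hxpos
      have hda := hder (a*x) haxI (ne_of_lt haxneg)
      have hda' : 0 < deriv ψ (a*x) := by nlinarith
      have : deriv ψ (ψ (a*x)) * deriv ψ (a*x) < 0 := mul_neg_of_neg_of_pos hds' hda'
      exact mul_neg_of_pos_of_neg hxpos this
  · intro x hx
    obtain ⟨hax1, hax2⟩ := key0 x hx
    obtain ⟨hs1, hs2⟩ := key1 (a*x) hax1 hax2
    obtain ⟨ht1, ht2⟩ := key2 (ψ (a*x)) hs1 hs2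
    have hia : (1:ℝ)/a ≤ 0 := le_of_lt (by exact one_div_neg.mpr haneg)
    have hub : (1/a) * ψ (ψ (a*x)) ≤ (1/a) * a := mul_le_mul_of_nonpos_left ht1 hia
    have hψs_lt : ψ (ψ (a*x)) ≤ -a' := by linarith
    have hlb : (1/a) * (-a') ≤ (1/a) * ψ (ψ (a*x)) := mul_le_mul_of_nonpos_left hψs_lt hia
    have e1 : (1/a) * a = 1 := by field_simp
    have e2 : (1/a) * (-a') = -(1+δ) := by rw [ha']; field_simp
    constructor
    · linarith
    · linarith
end

section
/- Let ω be irrational, let h : ℝ → ℝ be continuously differentiable, and let x : 𝕋 → ℝ be continuously differentiable with x(θ + ω) = h(x(θ)) for all θ. If there exists θ₀ with h'(x(θ₀)) = 0, then x' ≡ 0 on 𝕋, i.e., x is constant, and the constant value c satisfies c = h(c) and h'(c) = 0. -/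
/-- In `ℝ`, the subgroup generated by `1` and an irrational `ω` contains, for every
`ε > 0`, an element `g = n • ω + m` with `n ≥ 1`, `g ≠ 0`, `|g| < ε`. -/
lemma exists_small_combination {ω : ℝ} (hω : Irrational ω) {ε : ℝ} (hε : 0 < ε) :
    ∃ (g : ℝ) (n m : ℤ), 1 ≤ n ∧ g = n • ω + m ∧ g ≠ 0 ∧ |g| < ε := by
  set S : AddSubgroup ℝ := AddSubgroup.closure {ω, (1 : ℝ)} with hS
  have hdense : Dense (S : Set ℝ) := by
    rcases S.dense_or_cyclic with hd | ⟨a, ha⟩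
    · exact hd
    · exfalso
      have hωS : ω ∈ S := AddSubgroup.subset_closure (by simp)
      have h1S : (1 : ℝ) ∈ S := AddSubgroup.subset_closure (by simp)
      rw [ha, AddSubgroup.mem_closure_singleton] at hωS h1S
      obtain ⟨k, hk⟩ := hωS
      obtain ⟨l, hl⟩ := h1S
      have hl0 : l ≠ 0 := by
        rintro rfl; simp at hl
      have ha0 : a = 1 / l := by
        field_simp
        rw [mul_comm]
        simpa [zsmul_eq_mul] using hl
      apply hω.ne_rat (k / l)
      push_cast
      rw [← hk, ha0, zsmul_eq_mul]
      field_simp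
  -- find a nonzero element of `S` in `(0, min ε 1)`
  have hlt : (0 : ℝ) < min ε 1 := lt_min hε one_pos
  obtain ⟨g₀, hg₀S, hg₀⟩ : ∃ g₀ ∈ (S : Set ℝ), g₀ ∈ Set.Ioo 0 (min ε 1) := by
    have := hdense.exists_mem_open isOpen_Ioo (Set.nonempty_Ioo.2 hlt)
    tauto
  simp only [hS, SetLike.mem_coe, AddSubgroup.mem_closure_pair] at hg₀S
  obtain ⟨n₀, m₀, hnm⟩ := hg₀S
  have hg₀pos : 0 < g₀ := hg₀.1
  have hg₀lt : g₀ < min ε 1 := hg₀.2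
  have hn₀ : n₀ ≠ 0 := by
    rintro rfl
    have hm : (m₀ : ℝ) = g₀ := by simpa using hnm
    have h0 : (0 : ℝ) < (m₀ : ℝ) := by rw [hm]; exact hg₀pos
    have h1 : (1 : ℤ) ≤ m₀ := by exact_mod_cast h0
    have h1' : (1 : ℝ) ≤ (m₀ : ℝ) := by exact_mod_cast h1
    have h2 := hg₀lt.trans_le (min_le_right _ _)
    linarith
  rcases lt_or_gt_of_ne hn₀ with hneg | hpos
  · refine ⟨-g₀, -n₀, -m₀, by omega, ?_, neg_ne_zero.2 (ne_of_gt hg₀pos), ?_⟩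
    · rw [← hnm]; push_cast [zsmul_eq_mul]; ring
    · rw [abs_neg, abs_of_pos hg₀pos]
      exact hg₀lt.trans_le (min_le_left _ _)
  · refine ⟨g₀, n₀, m₀, by omega, ?_, ne_of_gt hg₀pos, ?_⟩
    · rw [← hnm]; push_cast [zsmul_eq_mul]; ring
    · rw [abs_of_pos hg₀pos]
      exact hg₀lt.trans_le (min_le_left _ _)

/-- An invariant curve of an uncoupled map whose fiber derivative vanishes at one
point must be a constant superattracting fixed point. -/
theorem invariant_curve_constant
    (ω : ℝ) (hω : Irrational ω)
    (h : ℝ → ℝ) (hh : ContDiff ℝ 1 h)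
    (x : ℝ → ℝ) (hx : ContDiff ℝ 1 x) (hper : Function.Periodic x 1)
    (hinv : ∀ θ, x (θ + ω) = h (x θ))
    (θ₀ : ℝ) (hcrit : deriv h (x θ₀) = 0) :
    (∀ θ, deriv x θ = 0) ∧
    ∃ c : ℝ, (∀ θ, x θ = c) ∧ h c = c ∧ deriv h c = 0 := by
  have hxd : Differentiable ℝ x := hx.differentiable one_ne_zero
  have hhd : Differentiable ℝ h := hh.differentiable one_ne_zero
  have hDcont : Continuous (deriv x) := hx.continuous_deriv le_rfl
  -- chain rule for the invariance equation
  have hchain : ∀ θ, deriv x (θ + ω) = deriv h (x θ) * deriv x θ := by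
    intro θ
    have e : (fun θ => x (θ + ω)) = fun θ => h (x θ) := funext hinv
    have h1 : deriv (fun θ => x (θ + ω)) θ = deriv x (θ + ω) :=
      deriv_comp_add_const x ω θ
    have h2 : deriv (fun θ => h (x θ)) θ = deriv h (x θ) * deriv x θ :=
      deriv_comp θ (hhd _) (hxd _)
    rw [← h1, e, h2]
  -- the derivative vanishes on the forward orbit
  have hforward : ∀ n : ℕ, deriv x (θ₀ + (n + 1) * ω) = 0 := by
    intro n
    induction n with
    | zero => simpa [hcrit] using hchain θ₀
    | succ k ih =>
        have : deriv x ((θ₀ + (k + 1) * ω) + ω) =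
            deriv h (x (θ₀ + (k + 1) * ω)) * deriv x (θ₀ + (k + 1) * ω) :=
          hchain _
        rw [ih, mul_zero] at this
        convert this using 2
        push_cast; ring
  -- the derivative is periodic
  have hDper : Function.Periodic (deriv x) 1 := by
    intro t
    have e : (fun θ => x (θ + 1)) = x := funext hper
    have h1 : deriv (fun θ => x (θ + 1)) t = deriv x (t + 1) :=
      deriv_comp_add_const x 1 t
    rw [← h1, e]
  have hshift : ∀ (t : ℝ) (m : ℤ), deriv x (t + m) = deriv x t := by
    intro t m
    have := (hDper.int_mul m) t
    simpa using this
  -- zeros of the derivative on the ℤ-shifted forward orbit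
  have hzeros : ∀ (n : ℕ) (m : ℤ), deriv x (θ₀ + (n + 1) * ω + m) = 0 := by
    intro n m
    rw [hshift]; exact hforward n
  -- main claim: the derivative vanishes everywhere
  have hD0 : ∀ θ, deriv x θ = 0 := by
    intro t
    have hclosed : IsClosed {θ : ℝ | deriv x θ = 0} :=
      isClosed_eq hDcont continuous_const
    have hmem : t ∈ closure {θ : ℝ | deriv x θ = 0} := by
      rw [Metric.mem_closure_iff]
      intro ε hε
      obtain ⟨g, n, m, hn1, hg, hg0, hgε⟩ := exists_small_combination hω hε
      -- choose an integer shift so that `(t + M - θ₀) / g ≥ 1`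
      obtain ⟨M, hM⟩ : ∃ M : ℤ, 1 ≤ (t + M - θ₀) / g := by
        rcases hg0.lt_or_gt with hgneg | hgpos
        · refine ⟨-⌈t - θ₀ - g⌉, ?_⟩
          rw [le_div_iff_of_neg hgneg, one_mul]
          push_cast
          have := Int.le_ceil (t - θ₀ - g)
          linarith
        · refine ⟨⌈θ₀ + g - t⌉, ?_⟩
          rw [le_div_iff₀ hgpos, one_mul]
          have := Int.le_ceil (θ₀ + g - t)
          linarith
      set r : ℝ := t + M - θ₀ with hr
      set k : ℤ := ⌊r / g⌋ with hk
      have hk1 : 1 ≤ k := by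
        exact_mod_cast Int.le_floor.2 (by exact_mod_cast hM)
      have hfl : (k : ℝ) ≤ r / g := Int.floor_le _
      have hfl' : r / g < k + 1 := Int.lt_floor_add_one _
      have hrg : r = (r / g) * g := (div_mul_cancel₀ r hg0).symm
      have hdist : |θ₀ + k * g - (t + M)| < |g| := by
        rcases hg0.lt_or_gt with hgneg | hgpos
        · have h1 : r ≤ k * g := by nlinarith [hfl, hrg]
          have h2 : (k + 1) * g < r := by nlinarith [hfl', hrg]
          rw [abs_of_neg hgneg, abs_of_nonneg (by linarith : (0:ℝ) ≤ θ₀ + k * g - (t + M))]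
          linarith
        · have h1 : k * g ≤ r := by nlinarith [hfl, hrg]
          have h2 : r < (k + 1) * g := by nlinarith [hfl', hrg]
          rw [abs_of_pos hgpos, abs_of_nonpos (by linarith : θ₀ + k * g - (t + M) ≤ 0)]
          linarith
      -- the zero point near `t`
      have hkn : 1 ≤ k * n := by nlinarith
      refine ⟨θ₀ + k * g - M, ?_, ?_⟩
      · show deriv x (θ₀ + k * g - M) = 0
        have hkn' : ∃ N : ℕ, k * n = (N : ℤ) + 1 := ⟨(k * n - 1).toNat, by omega⟩
        obtain ⟨N, hN⟩ := hkn'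
        have : θ₀ + k * g - M = θ₀ + ((N : ℝ) + 1) * ω + ((k * m - M : ℤ) : ℝ) := by
          rw [hg]
          push_cast [zsmul_eq_mul]
          have : ((k : ℝ) * n) = (N : ℝ) + 1 := by exact_mod_cast congrArg (Int.cast : ℤ → ℝ) hN
          linear_combination ω * this
        rw [this]
        exact hzeros N _
      · rw [Real.dist_eq]
        calc |t - (θ₀ + k * g - M)| = |θ₀ + k * g - (t + M)| := by rw [abs_sub_comm]; ring_nf
          _ < |g| := hdist
          _ < ε := hgε
    exact hclosed.closure_subset hmem
  -- conclude: `x` is constant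
  have hconst : ∀ a b : ℝ, x a = x b := is_const_of_deriv_eq_zero hxd hD0
  refine ⟨hD0, x θ₀, fun θ => hconst θ θ₀, ?_, hcrit⟩
  have := hinv θ₀
  rw [hconst (θ₀ + ω) θ₀] at this
  exact this.symm
end
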